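/- arXiv:2312.13493 — 2 statements merged into one kernel-verified Lean document; each statement's English description precedes it below -/
import Mathlib

section
/- Let γ = α_{ij} be a positive root of A_n and let < denote the convex order on positive roots defined by α_{ab} < α_{cd} iff b > d, or b = d and a > c. Then the sum of (γ, θ) over all positive roots θ with θ < γ equals j − i − 1, and the sum of (γ, θ) over all positive roots θ with θ > γ also equals j − i − 1. In particular these two sums are equal. -/
/-- The positive root `α_{ij} = ε_i - ε_j` of `A_n`, as a vector in `ℝ^{n+1}`. -/
def aroot (n : ℕ) (i j : Fin (n + 1)) : Fin (n + 1) → ℝ :=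
  fun t => (if t = i then 1 else 0) - (if t = j then 1 else 0)

/-- The standard Euclidean inner product on `ℝ^{n+1}`. -/
def ip (n : ℕ) (x y : Fin (n + 1) → ℝ) : ℝ := ∑ t, x t * y t

lemma ip_eval (n : ℕ) (i j a b : Fin (n + 1)) :
    ip n (aroot n i j) (aroot n a b) =
      (if a = i then (1:ℝ) else 0) - (if a = j then 1 else 0)
      - (if b = i then 1 else 0) + (if b = j then 1 else 0) := by
  simp only [ip, aroot, sub_mul, mul_sub, ite_mul, one_mul, zero_mul,
    Finset.sum_sub_distrib]
  simp [Finset.sum_ite_eq', eq_comm]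
  ring

lemma sum_boole' {α : Type*} (s : Finset α) (P : α → Prop) [DecidablePred P] :
    (∑ x ∈ s, (if P x then (1:ℝ) else 0)) = (s.filter P).card := by
  simp [Finset.sum_boole]

/-- For `γ = α_{ij}` and the convex order `α_{ab} < α_{cd}` iff
`b > d`, or `b = d` and `a > c`, the sum of `(γ, θ)` over positive roots `θ < γ` equals
`j - i - 1`, and likewise over `θ > γ`; in particular the two sums agree. -/
theorem stmt4 (n : ℕ) (i j : Fin (n + 1)) (hij : i < j) :
    (∑ p ∈ Finset.univ.filter (fun p : Fin (n + 1) × Fin (n + 1) =>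
        p.1 < p.2 ∧ (j < p.2 ∨ (p.2 = j ∧ i < p.1))),
      ip n (aroot n i j) (aroot n p.1 p.2)) = ((j : ℕ) : ℝ) - ((i : ℕ) : ℝ) - 1 ∧
    (∑ p ∈ Finset.univ.filter (fun p : Fin (n + 1) × Fin (n + 1) =>
        p.1 < p.2 ∧ (p.2 < j ∨ (j = p.2 ∧ p.1 < i))),
      ip n (aroot n i j) (aroot n p.1 p.2)) = ((j : ℕ) : ℝ) - ((i : ℕ) : ℝ) - 1 := by
  have hij' : (i : ℕ) < (j : ℕ) := hij
  constructor
  · set S := Finset.univ.filter (fun p : Fin (n + 1) × Fin (n + 1) =>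
        p.1 < p.2 ∧ (j < p.2 ∨ (p.2 = j ∧ i < p.1))) with hS
    have key : (∑ p ∈ S, ip n (aroot n i j) (aroot n p.1 p.2)) =
        ((S.filter (fun p => p.1 = i)).card : ℝ) - (S.filter (fun p => p.1 = j)).card
        - (S.filter (fun p => p.2 = i)).card + (S.filter (fun p => p.2 = j)).card := by
      rw [← sum_boole' S (fun p => p.1 = i), ← sum_boole' S (fun p => p.1 = j),
        ← sum_boole' S (fun p => p.2 = i), ← sum_boole' S (fun p => p.2 = j)]
      rw [← Finset.sum_sub_distrib, ← Finset.sum_sub_distrib, ← Finset.sum_add_distrib]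
      exact Finset.sum_congr rfl fun p _ => ip_eval n i j p.1 p.2
    have c1 : S.filter (fun p => p.1 = i) = {i} ×ˢ (Finset.Ioi j) := by
      ext p
      simp only [hS, Finset.mem_filter, Finset.mem_univ, true_and, Finset.mem_product,
        Finset.mem_singleton, Finset.mem_Ioi, Fin.lt_def, Fin.ext_iff]
      omega
    have c2 : S.filter (fun p => p.1 = j) = {j} ×ˢ (Finset.Ioi j) := by
      ext p
      simp only [hS, Finset.mem_filter, Finset.mem_univ, true_and, Finset.mem_product,
        Finset.mem_singleton, Finset.mem_Ioi, Fin.lt_def, Fin.ext_iff]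
      omega
    have c3 : S.filter (fun p => p.2 = i) = ∅ := by
      ext p
      simp only [hS, Finset.mem_filter, Finset.mem_univ, true_and, Finset.notMem_empty,
        iff_false, Fin.lt_def, Fin.ext_iff, not_and, not_or]
      omega
    have c4 : S.filter (fun p => p.2 = j) = (Finset.Ioo i j) ×ˢ {j} := by
      ext p
      simp only [hS, Finset.mem_filter, Finset.mem_univ, true_and, Finset.mem_product,
        Finset.mem_singleton, Finset.mem_Ioo, Fin.lt_def, Fin.ext_iff]
      omega
    rw [key, c1, c2, c3, c4]
    simp [Fin.card_Ioi, Fin.card_Ioo]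
    rw [Nat.cast_sub (by omega : 1 ≤ (j:ℕ)-(i:ℕ)), Nat.cast_sub hij'.le, Nat.cast_one]

  · set S := Finset.univ.filter (fun p : Fin (n + 1) × Fin (n + 1) =>
        p.1 < p.2 ∧ (p.2 < j ∨ (j = p.2 ∧ p.1 < i))) with hS
    have key : (∑ p ∈ S, ip n (aroot n i j) (aroot n p.1 p.2)) =
        ((S.filter (fun p => p.1 = i)).card : ℝ) - (S.filter (fun p => p.1 = j)).card
        - (S.filter (fun p => p.2 = i)).card + (S.filter (fun p => p.2 = j)).card := by
      rw [← sum_boole' S (fun p => p.1 = i), ← sum_boole' S (fun p => p.1 = j),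
        ← sum_boole' S (fun p => p.2 = i), ← sum_boole' S (fun p => p.2 = j)]
      rw [← Finset.sum_sub_distrib, ← Finset.sum_sub_distrib, ← Finset.sum_add_distrib]
      exact Finset.sum_congr rfl fun p _ => ip_eval n i j p.1 p.2
    have c1 : S.filter (fun p => p.1 = i) = {i} ×ˢ (Finset.Ioo i j) := by
      ext p
      simp only [hS, Finset.mem_filter, Finset.mem_univ, true_and, Finset.mem_product,
        Finset.mem_singleton, Finset.mem_Ioo, Fin.lt_def, Fin.ext_iff]
      omega
    have c2 : S.filter (fun p => p.1 = j) = ∅ := by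
      ext p
      simp only [hS, Finset.mem_filter, Finset.mem_univ, true_and, Finset.notMem_empty,
        iff_false, Fin.lt_def, Fin.ext_iff, not_and, not_or]
      omega
    have c3 : S.filter (fun p => p.2 = i) = (Finset.Iio i) ×ˢ {i} := by
      ext p
      simp only [hS, Finset.mem_filter, Finset.mem_univ, true_and, Finset.mem_product,
        Finset.mem_singleton, Finset.mem_Iio, Fin.lt_def, Fin.ext_iff]
      omega
    have c4 : S.filter (fun p => p.2 = j) = (Finset.Iio i) ×ˢ {j} := by
      ext p
      simp only [hS, Finset.mem_filter, Finset.mem_univ, true_and, Finset.mem_product,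
        Finset.mem_singleton, Finset.mem_Iio, Fin.lt_def, Fin.ext_iff]
      omega
    rw [key, c1, c2, c3, c4]
    simp [Fin.card_Ioo, Fin.card_Iio]
    rw [Nat.cast_sub (by omega : 1 ≤ (j:ℕ)-(i:ℕ)), Nat.cast_sub hij'.le, Nat.cast_one]
end

section
/- Let A be the quantum exterior algebra over a field k on generators e_1, ..., e_m with relations e_i² = 0 and e_i e_j = −q^{a_{ij}} e_j e_i for i < j, where q ≠ 0 and the integers a_{ij} satisfy: for each fixed i, Σ_{j < i} a_{ji} = Σ_{j > i} a_{ij}. Then for each generator e_i, writing ê_i := e_1 ··· e_{i-1} e_{i+1} ··· e_m, one has e_i · ê_i = (−1)^{m−1} ê_i · e_i; consequently the Nakayama automorphism of the Frobenius structure B(v,w) = ι([vw]_m) satisfies σ(e_i) = (−1)^{m−1} e_i for all i. -/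
namespace Stmt19

variable {k : Type*} [Field k] {m : ℕ} {A : Type*} [Ring A] [Algebra k A]

/-- The commutation scalar: `e i * e j = cc q a i j • (e j * e i)` for `i ≠ j`. -/
def cc (q : k) (a : Fin m → Fin m → ℤ) (i j : Fin m) : k :=
  -(q ^ (if i < j then a i j else -(a j i)))

theorem cc_ne_zero {q : k} (hq : q ≠ 0) (a : Fin m → Fin m → ℤ) (i j : Fin m) :
    cc q a i j ≠ 0 := neg_ne_zero.2 (zpow_ne_zero _ hq)

variable {q : k} {a : Fin m → Fin m → ℤ} {e : Fin m → A}

section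

variable (hq : q ≠ 0)
  (hrel : ∀ i j : Fin m, i < j → e i * e j = (-(q ^ (a i j))) • (e j * e i))

include hq hrel

theorem swap {i j : Fin m} (h : i ≠ j) :
    e i * e j = cc q a i j • (e j * e i) := by
  rcases lt_or_gt_of_ne h with hij | hji
  · rw [cc, if_pos hij]; exact hrel i j hij
  · rw [cc, if_neg (not_lt_of_gt hji)]
    rw [hrel j i hji, smul_smul, neg_mul_neg, zpow_neg,
      inv_mul_cancel₀ (zpow_ne_zero _ hq), one_smul]

theorem move (i : Fin m) : ∀ l : List (Fin m), i ∉ l →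
    e i * (l.map e).prod = (l.map (cc q a i)).prod • ((l.map e).prod * e i)
  | [], _ => by simp
  | j :: t, h => by
    have hij : i ≠ j := fun h' => h (h' ▸ List.mem_cons_self)
    have hit : i ∉ t := fun h' => h (List.mem_cons_of_mem _ h')
    simp only [List.map_cons, List.prod_cons]
    rw [← mul_assoc, swap hq hrel hij, smul_mul_assoc, mul_assoc,
      move i t hit, mul_smul_comm, smul_smul, ← mul_assoc]

variable (hsq : ∀ i : Fin m, e i * e i = 0)
include hsq

theorem mul_of_mem (i : Fin m) : ∀ l : List (Fin m), i ∈ l → e i * (l.map e).prod = 0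
  | j :: t, h => by
    by_cases hij : i = j
    · subst hij
      simp only [List.map_cons, List.prod_cons, ← mul_assoc, hsq, zero_mul]
    · have hit : i ∈ t := (List.mem_cons.1 h).resolve_left hij
      simp only [List.map_cons, List.prod_cons]
      rw [← mul_assoc, swap hq hrel hij, smul_mul_assoc, mul_assoc,
        mul_of_mem i t hit, mul_zero, smul_zero]

omit hsq in
theorem ordered_insert (i : Fin m) : ∀ l : List (Fin m), l.Pairwise (· ≤ ·) → i ∉ l →
    ∃ γ : k, γ ≠ 0 ∧
      e i * (l.map e).prod = γ • ((List.orderedInsert (· ≤ ·) i l).map e).prod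
  | [], _, _ => ⟨1, one_ne_zero, by simp⟩
  | j :: t, hs, h => by
    have hij : i ≠ j := fun h' => h (h' ▸ List.mem_cons_self)
    have hit : i ∉ t := fun h' => h (List.mem_cons_of_mem _ h')
    by_cases hle : i ≤ j
    · exact ⟨1, one_ne_zero, by simp [List.orderedInsert, hle]⟩
    · obtain ⟨γ, hγ, hp⟩ := ordered_insert i t hs.of_cons hit
      refine ⟨cc q a i j * γ, mul_ne_zero (cc_ne_zero hq a i j) hγ, ?_⟩
      simp only [List.orderedInsert, if_neg hle, List.map_cons, List.prod_cons]
      rw [← mul_assoc, swap hq hrel hij, smul_mul_assoc, mul_assoc, hp,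
        mul_smul_comm, smul_smul]

theorem sort_scalar : ∀ l : List (Fin m), l.Nodup →
    ∃ γ : k, γ ≠ 0 ∧ (l.map e).prod = γ • ((l.insertionSort (· ≤ ·)).map e).prod
  | [], _ => ⟨1, one_ne_zero, by simp⟩
  | i :: t, h => by
    obtain ⟨hit, ht⟩ := List.nodup_cons.1 h
    obtain ⟨γ, hγ, hp⟩ := sort_scalar t ht
    have hs : (t.insertionSort (· ≤ ·)).Pairwise (· ≤ ·) := List.pairwise_insertionSort _ t
    have hmem : i ∉ t.insertionSort (· ≤ ·) := fun h' => hit ((List.mem_insertionSort _).1 h')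
    obtain ⟨γ', hγ', hp'⟩ := ordered_insert hq hrel i _ hs hmem
    refine ⟨γ * γ', mul_ne_zero hγ hγ', ?_⟩
    simp only [List.map_cons, List.prod_cons, List.insertionSort_cons]
    rw [hp, mul_smul_comm, hp', smul_smul]

theorem prod_zero : ∀ l : List (Fin m), ¬ l.Nodup → (l.map e).prod = 0
  | [], h => absurd List.nodup_nil h
  | i :: t, h => by
    simp only [List.map_cons, List.prod_cons]
    by_cases ht : t.Nodup
    · have hit : i ∈ t := by
        by_contra hit; exact h (List.nodup_cons.2 ⟨hit, ht⟩)
      obtain ⟨γ, hγ, hp⟩ := sort_scalar hq hrel hsq t ht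
      rw [hp, mul_smul_comm,
        mul_of_mem hq hrel hsq i _ ((List.mem_insertionSort _).2 hit), smul_zero]
    · rw [prod_zero t ht, mul_zero]

omit hq hrel hsq in
theorem insertionSort_eq_sort {l : List (Fin m)} (hl : l.Nodup) :
    l.insertionSort (· ≤ ·) = l.toFinset.sort (· ≤ ·) := by
  refine List.Perm.eq_of_pairwise' (List.pairwise_insertionSort _ l) (Finset.pairwise_sort _ _) ?_
  refine (List.perm_insertionSort _ l).trans ?_
  rw [← Multiset.coe_eq_coe, Finset.sort_eq]
  change (l : Multiset (Fin m)) = (l : Multiset (Fin m)).toFinset.1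
  rw [Multiset.toFinset_val, Multiset.coe_nodup.2 hl |> Multiset.dedup_eq_self.2]

theorem prod_eq_basis (b : Module.Basis (Finset (Fin m)) k A)
    (hb : ∀ S : Finset (Fin m), b S = ((S.sort (· ≤ ·)).map e).prod)
    {l : List (Fin m)} (hl : l.Nodup) :
    ∃ γ : k, γ ≠ 0 ∧ (l.map e).prod = γ • b l.toFinset := by
  obtain ⟨γ, hγ, hp⟩ := sort_scalar hq hrel hsq l hl
  exact ⟨γ, hγ, by rw [hp, hb, ← insertionSort_eq_sort hl]⟩

end


section

variable (hq : q ≠ 0)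
  (hrel : ∀ i j : Fin m, i < j → e i * e j = (-(q ^ (a i j))) • (e j * e i))
  (hsq : ∀ i : Fin m, e i * e i = 0)
  (b : Module.Basis (Finset (Fin m)) k A)
  (hb : ∀ S : Finset (Fin m), b S = ((S.sort (· ≤ ·)).map e).prod)

include hq hrel hsq hb

theorem basis_mul_eq (S T : Finset (Fin m)) :
    b S * b T = (((S.sort (· ≤ ·)) ++ (T.sort (· ≤ ·))).map e).prod := by
  rw [hb S, hb T, List.map_append, List.prod_append]

theorem basis_mul_disj {S T : Finset (Fin m)} (h : Disjoint S T) :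
    ∃ γ : k, γ ≠ 0 ∧ b S * b T = γ • b (S ∪ T) := by
  have hl : ((S.sort (· ≤ ·)) ++ (T.sort (· ≤ ·))).Nodup := by
    rw [List.nodup_append]
    refine ⟨Finset.sort_nodup _ _, Finset.sort_nodup _ _, fun x hx y hx' hxy => ?_⟩
    exact Finset.disjoint_left.1 h ((Finset.mem_sort _).1 hx) (hxy ▸ (Finset.mem_sort _).1 hx')
  obtain ⟨γ, hγ, hp⟩ := prod_eq_basis hq hrel hsq b hb hl
  refine ⟨γ, hγ, ?_⟩
  rw [basis_mul_eq hq hrel hsq b hb, hp, List.toFinset_append,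
    Finset.sort_toFinset, Finset.sort_toFinset]

theorem basis_mul_ndisj {S T : Finset (Fin m)} (h : ¬ Disjoint S T) :
    b S * b T = 0 := by
  have hl : ¬ ((S.sort (· ≤ ·)) ++ (T.sort (· ≤ ·))).Nodup := by
    rw [List.nodup_append]
    rintro ⟨-, -, hd⟩
    obtain ⟨x, hxS, hxT⟩ := Finset.not_disjoint_iff.1 h
    exact hd _ ((Finset.mem_sort _).2 hxS) _ ((Finset.mem_sort _).2 hxT) rfl
  rw [basis_mul_eq hq hrel hsq b hb, prod_zero hq hrel hsq _ hl]

end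

theorem zpow_sum {ι : Type*} {q : k} (hq : q ≠ 0) (s : Finset ι) (f : ι → ℤ) :
    ∏ j ∈ s, q ^ (f j) = q ^ (∑ j ∈ s, f j) := by
  classical
  induction s using Finset.induction with
  | empty => simp
  | insert _ _ h ih => rw [Finset.prod_insert h, Finset.sum_insert h, zpow_add₀ hq, ih]

end Stmt19

/-- Let `A` be the quantum exterior algebra on `e₁, …, e_m` over a
field `k`, with `eᵢ² = 0` and `eᵢeⱼ = -q^{a_{ij}} eⱼeᵢ` for `i < j`, where `q ≠ 0` and
the integer exponents satisfy the balance condition `Σ_{j<i} a_{ji} = Σ_{j>i} a_{ij}`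
for every `i`; the strictly increasing monomials form a basis `b` indexed by subsets.
Write `ê_i` for the increasingly-ordered product of all generators except `e_i`, and
let `B(v,w) := ι([vw]_m) = ιc · (top coefficient of vw)` be the Frobenius form
(`ιc ≠ 0`). Then `e_i ê_i = (-1)^{m-1} ê_i e_i`, and consequently any Nakayama
automorphism `σ` (i.e. satisfying `B(x,y) = B(y, σ(x))`) has
`σ(e_i) = (-1)^{m-1} e_i` for all `i`. -/
theorem stmt19 (k : Type*) [Field k] (m : ℕ) (q : k) (hq : q ≠ 0)
    (a : Fin m → Fin m → ℤ)
    (ha : ∀ i : Fin m,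
      (∑ j ∈ Finset.univ.filter (fun j : Fin m => j < i), a j i)
        = ∑ j ∈ Finset.univ.filter (fun j : Fin m => i < j), a i j)
    (A : Type*) [Ring A] [Algebra k A]
    (e : Fin m → A)
    (hsq : ∀ i : Fin m, e i * e i = 0)
    (hrel : ∀ i j : Fin m, i < j → e i * e j = (-(q ^ (a i j))) • (e j * e i))
    (b : Module.Basis (Finset (Fin m)) k A)
    (hb : ∀ S : Finset (Fin m), b S = ((S.sort (· ≤ ·)).map e).prod)
    (ιc : k) (hι : ιc ≠ 0)
    (B : A → A → k)
    (hB : ∀ v w : A, B v w = ιc * b.repr (v * w) Finset.univ)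
    (ehat : Fin m → A)
    (hehat : ∀ i : Fin m, ehat i = (((Finset.univ.erase i).sort (· ≤ ·)).map e).prod) :
    (∀ i : Fin m, e i * ehat i = ((-1 : k) ^ (m - 1)) • (ehat i * e i)) ∧
    (∀ σ : A →ₗ[k] A, (∀ x y : A, B x y = B y (σ x)) →
      ∀ i : Fin m, σ (e i) = ((-1 : k) ^ (m - 1)) • e i) := by
  classical
  have part1 : ∀ i : Fin m, e i * ehat i = ((-1 : k) ^ (m - 1)) • (ehat i * e i) := by
    intro i
    have hni : i ∉ (Finset.univ.erase i).sort (· ≤ ·) := by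
      simp [Finset.mem_sort]
    rw [hehat, Stmt19.move hq hrel i _ hni]
    congr 1
    have h1 : (((Finset.univ.erase i).sort (· ≤ ·)).map (Stmt19.cc q a i)).prod
        = ∏ j ∈ Finset.univ.erase i, Stmt19.cc q a i j := by
      rw [Finset.prod_eq_multiset_prod, ← Finset.sort_eq (Finset.univ.erase i) (· ≤ ·),
        Multiset.map_coe, Multiset.prod_coe]
    rw [h1]
    have h2 : ∀ j ∈ Finset.univ.erase i, Stmt19.cc q a i j
        = (-1) * q ^ (if i < j then a i j else -(a j i)) := fun j _ => by
      rw [Stmt19.cc]; ring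
    rw [Finset.prod_congr rfl h2, Finset.prod_mul_distrib, Finset.prod_const,
      Stmt19.zpow_sum hq]
    have hcard : (Finset.univ.erase i).card = m - 1 := by
      rw [Finset.card_erase_of_mem (Finset.mem_univ i), Finset.card_univ, Fintype.card_fin]
    have hsum : (∑ j ∈ Finset.univ.erase i, (if i < j then a i j else -(a j i))) = 0 := by
      have hset : Finset.univ.erase i
          = (Finset.univ.filter (fun j : Fin m => j < i))
            ∪ (Finset.univ.filter (fun j : Fin m => i < j)) := by
        ext j
        simp only [Finset.mem_erase, Finset.mem_univ, and_true, Finset.mem_union,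
          Finset.mem_filter, true_and]
        constructor
        · exact fun h => h.lt_or_gt
        · rintro (h | h)
          exacts [h.ne, h.ne']
      have hd : Disjoint (Finset.univ.filter (fun j : Fin m => j < i))
          (Finset.univ.filter (fun j : Fin m => i < j)) := by
        rw [Finset.disjoint_left]
        intro x hx hx'
        simp only [Finset.mem_filter] at hx hx'
        exact absurd (hx.2.trans hx'.2) (lt_irrefl x)
      have e1 : (∑ j ∈ Finset.univ.filter (fun j : Fin m => j < i),
          (if i < j then a i j else -(a j i)))
          = ∑ j ∈ Finset.univ.filter (fun j : Fin m => j < i), -(a j i) :=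
        Finset.sum_congr rfl (fun j hj => if_neg (asymm (Finset.mem_filter.1 hj).2))
      have e2 : (∑ j ∈ Finset.univ.filter (fun j : Fin m => i < j),
          (if i < j then a i j else -(a j i)))
          = ∑ j ∈ Finset.univ.filter (fun j : Fin m => i < j), a i j :=
        Finset.sum_congr rfl (fun j hj => if_pos (Finset.mem_filter.1 hj).2)
      rw [hset, Finset.sum_union hd, e1, e2, Finset.sum_neg_distrib, ha i, neg_add_cancel]
    rw [hcard, hsum, zpow_zero, mul_one]
  refine ⟨part1, ?_⟩
  intro σ hσ i
  set c : k := (-1 : k) ^ (m - 1) with hc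
  have key : ∀ x : A, b.repr (e i * x) Finset.univ = c * b.repr (x * e i) Finset.univ := by
    have hmaps :
        (Finsupp.lapply (Finset.univ : Finset (Fin m))).comp
            (b.repr.toLinearMap.comp (LinearMap.mulLeft k (e i)))
          = c • ((Finsupp.lapply (Finset.univ : Finset (Fin m))).comp
            (b.repr.toLinearMap.comp (LinearMap.mulRight k (e i)))) := by
      apply b.ext
      intro S
      simp only [LinearMap.comp_apply, LinearMap.smul_apply, LinearMap.mulLeft_apply,
        LinearMap.mulRight_apply, Finsupp.lapply_apply, LinearEquiv.coe_toLinearMap,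
        smul_eq_mul]
      by_cases hiS : i ∈ S
      · have h1 : e i * b S = 0 := by
          rw [hb S]
          exact Stmt19.mul_of_mem hq hrel hsq i _ ((Finset.mem_sort _).2 hiS)
        have h2 : b S * e i = 0 := by
          have heq : b S * e i = ((S.sort (· ≤ ·) ++ [i]).map e).prod := by
            rw [hb S, List.map_append, List.prod_append]; simp
          rw [heq, Stmt19.prod_zero hq hrel hsq]
          rw [List.nodup_append]
          rintro ⟨-, -, hdis⟩
          exact hdis _ ((Finset.mem_sort _).2 hiS) _ (List.mem_singleton_self i) rfl
        rw [h1, h2, map_zero]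
        simp
      · by_cases hS : S = Finset.univ.erase i
        · subst hS
          have hbS : b (Finset.univ.erase i) = ehat i := by rw [hb, hehat]
          rw [hbS, part1 i, map_smul, Finsupp.smul_apply, smul_eq_mul]
        · have hins : insert i S ≠ Finset.univ := by
            intro h
            exact hS (by rw [← h, Finset.erase_insert hiS])
          have h1 : b.repr (e i * b S) Finset.univ = 0 := by
            have hl : (i :: S.sort (· ≤ ·)).Nodup :=
              List.nodup_cons.2 ⟨fun h => hiS ((Finset.mem_sort _).1 h), Finset.sort_nodup _ _⟩
            obtain ⟨γ, hγ, hp⟩ := Stmt19.prod_eq_basis hq hrel hsq b hb hl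
            simp only [List.map_cons, List.prod_cons, List.toFinset_cons,
              Finset.sort_toFinset] at hp
            rw [hb S, hp, map_smul, Finsupp.smul_apply, b.repr_self,
              Finsupp.single_eq_of_ne hins.symm, smul_zero]
          have h2 : b.repr (b S * e i) Finset.univ = 0 := by
            have hl : ((S.sort (· ≤ ·)) ++ [i]).Nodup := by
              rw [List.nodup_append]
              exact ⟨Finset.sort_nodup _ _, List.nodup_singleton i,
                fun x hx y hx' hxy => hiS (by
                  rw [hxy, List.mem_singleton.1 hx'] at hx
                  exact (Finset.mem_sort _).1 hx)⟩
            obtain ⟨γ, hγ, hp⟩ := Stmt19.prod_eq_basis hq hrel hsq b hb hl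
            simp only [List.map_append, List.prod_append, List.toFinset_append,
              Finset.sort_toFinset, List.map_cons, List.map_nil, List.prod_cons,
              List.prod_nil, mul_one, List.toFinset_cons, List.toFinset_nil,
              insert_empty_eq] at hp
            have hsi : S ∪ {i} = insert i S := by ext x; simp [or_comm]
            rw [hsi] at hp
            rw [hb S, hp, map_smul, Finsupp.smul_apply, b.repr_self,
              Finsupp.single_eq_of_ne hins.symm, smul_zero]
          rw [h1, h2, mul_zero]
    intro x
    simpa using DFunLike.congr_fun hmaps x
  have key2 : ∀ T : Finset (Fin m), ∃ γ : k, γ ≠ 0 ∧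
      ∀ x : A, b.repr (b Tᶜ * x) Finset.univ = γ * b.repr x T := by
    intro T
    obtain ⟨γ, hγ, hp⟩ := Stmt19.basis_mul_disj hq hrel hsq b hb
      (disjoint_compl_left (a := T))
    have hU : Tᶜ ∪ T = Finset.univ := by
      ext x; by_cases h : x ∈ T <;> simp [h]
    rw [hU] at hp
    refine ⟨γ, hγ, ?_⟩
    have hmaps :
        (Finsupp.lapply (Finset.univ : Finset (Fin m))).comp
            (b.repr.toLinearMap.comp (LinearMap.mulLeft k (b Tᶜ)))
          = γ • ((Finsupp.lapply T).comp b.repr.toLinearMap) := by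
      apply b.ext
      intro S
      simp only [LinearMap.comp_apply, LinearMap.smul_apply, LinearMap.mulLeft_apply,
        Finsupp.lapply_apply, LinearEquiv.coe_toLinearMap, smul_eq_mul]
      by_cases hST : S = T
      · subst hST
        rw [hp, map_smul, Finsupp.smul_apply, b.repr_self, Finsupp.single_eq_same,
          b.repr_self, Finsupp.single_eq_same]
        simp
      · rw [b.repr_self, Finsupp.single_eq_of_ne (Ne.symm hST), mul_zero]
        by_cases hdis : Disjoint Tᶜ S
        · obtain ⟨γ', hγ', hp'⟩ := Stmt19.basis_mul_disj hq hrel hsq b hb hdis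
          have hne : Tᶜ ∪ S ≠ Finset.univ := by
            intro h
            apply hST
            have hsub : S ⊆ T := by
              intro x hx
              by_contra hxT
              exact Finset.disjoint_left.1 hdis (Finset.mem_compl.2 hxT) hx
            refine Finset.Subset.antisymm hsub (fun x hx => ?_)
            have : x ∈ Tᶜ ∪ S := h ▸ Finset.mem_univ x
            rcases Finset.mem_union.1 this with h' | h'
            · exact absurd hx (Finset.mem_compl.1 h')
            · exact h'
          rw [hp', map_smul, Finsupp.smul_apply, b.repr_self,
            Finsupp.single_eq_of_ne hne.symm, smul_zero]
        · rw [Stmt19.basis_mul_ndisj hq hrel hsq b hb hdis, map_zero]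
          simp
    intro x
    simpa using DFunLike.congr_fun hmaps x
  have hrepr0 : ∀ T : Finset (Fin m), b.repr (σ (e i) - c • e i) T = 0 := by
    intro T
    obtain ⟨γ, hγ, hT⟩ := key2 T
    have h1 : B (e i) (b Tᶜ) = B (b Tᶜ) (σ (e i)) := hσ (e i) (b Tᶜ)
    rw [hB, hB] at h1
    have h2 : b.repr (b Tᶜ * σ (e i)) Finset.univ = b.repr (e i * b Tᶜ) Finset.univ :=
      (mul_left_cancel₀ hι h1).symm
    have h4 : b.repr (b Tᶜ * (σ (e i) - c • e i)) Finset.univ = 0 := by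
      rw [mul_sub, mul_smul_comm, map_sub, map_smul, Finsupp.sub_apply, Finsupp.smul_apply,
        smul_eq_mul, h2, key (b Tᶜ), sub_self]
    have h5 := hT (σ (e i) - c • e i)
    rw [h4] at h5
    exact (mul_eq_zero.1 h5.symm).resolve_left hγ
  have h0 : σ (e i) - c • e i = 0 :=
    b.ext_elem (fun T => by rw [map_zero, hrepr0 T]; rfl)
  rw [sub_eq_zero] at h0
  exact h0
end
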